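/- arXiv:2008.07059 — 5 statements merged into one kernel-verified Lean document; each statement's English description precedes it below -/
import Mathlib

section
/- Let n ≥ 2. Then for every real x, det(xI − ℒ(B_n²)) = (x − 6/5)^4 · (x − 8/7)^{2n−2} · det(xI_{n+1} − 2M) · det(xI_{n+1} − 2N). Equivalently, the normalized Laplacian spectrum of B_n² consists of 6/5 with multiplicity 4, 8/7 with multiplicity 2n−2, together with the numbers 2α_i (1 ≤ i ≤ n+1) and 2β_j (1 ≤ j ≤ n+1), where α_1 ≤ … ≤ α_{n+1} are the eigenvalues of M and β_1 ≤ … ≤ β_{n+1} are the eigenvalues of N. -/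
/-- The tridiagonal matrix `M` (of size `(n+1) × (n+1)`). -/
noncomputable def Mmat (n : ℕ) : Matrix (Fin (n+1)) (Fin (n+1)) ℝ :=
  Matrix.of fun i j =>
    if i = j then (if i.val = 0 ∨ i.val = n then 1/5 else 2/7)
    else if i.val + 1 = j.val ∨ j.val + 1 = i.val then
      (if min i.val j.val = 0 ∨ max i.val j.val = n then -(1/Real.sqrt 35) else -(1/7))
    else 0

/-- The tridiagonal matrix `N` (of size `(n+1) × (n+1)`). -/
noncomputable def Nmat (n : ℕ) : Matrix (Fin (n+1)) (Fin (n+1)) ℝ :=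
  Matrix.of fun i j =>
    if i = j then (if i.val = 0 ∨ i.val = n then 3/5 else 4/7)
    else if i.val + 1 = j.val ∨ j.val + 1 = i.val then
      (if min i.val j.val = 0 ∨ max i.val j.val = n then -(1/Real.sqrt 35) else -(1/7))
    else 0

/-- The linear polyomino chain `B_n`, with vertices `u_i = (i, false)` and
`v_i = (i, true)` for `0 ≤ i ≤ n`, edges `u_i u_{i+1}`, `v_i v_{i+1}` and `u_i v_i`. -/
def Bgraph (n : ℕ) : SimpleGraph (Fin (n+1) × Bool) :=
  SimpleGraph.fromRel (fun x y => (x.2 = y.2 ∧ x.1.val + 1 = y.1.val) ∨ (x.1 = y.1))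

/-- The strong prism `G ⊠ K₂`: distinct `(x, s)` and `(y, t)` are adjacent
iff `x = y` or `x` is adjacent to `y` in `G`. -/
def strongPrism {V : Type*} (G : SimpleGraph V) : SimpleGraph (V × Bool) :=
  SimpleGraph.fromRel (fun x y => x.1 = y.1 ∨ G.Adj x.1 y.1)

open scoped Classical in
/-- The normalized Laplacian `ℒ(G) = I − D^{−1/2} A D^{−1/2}` of a graph, given
entrywise: `1` on the diagonal, `−1/√(dᵢ dⱼ)` at adjacent pairs, `0` otherwise. -/
noncomputable def normLap {V : Type*} [Fintype V] (G : SimpleGraph V) : Matrix V V ℝ :=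
  Matrix.of fun i j =>
    if i = j then 1
    else if G.Adj i j then -(1 / Real.sqrt ((G.degree i : ℝ) * (G.degree j))) else 0

open Matrix

def sumProdBool (V : Type*) : V ⊕ V ≃ V × Bool where
  toFun := Sum.elim (fun v => (v, false)) (fun v => (v, true))
  invFun := fun p => cond p.2 (Sum.inr p.1) (Sum.inl p.1)
  left_inv := by rintro (v|v) <;> rfl
  right_inv := by rintro ⟨v, (_|_)⟩ <;> rfl

lemma det_block_swap {V : Type*} [Fintype V] [DecidableEq V]
    (A B : Matrix V V ℝ) (X : Matrix (V × Bool) (V × Bool) ℝ)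
    (hX : ∀ a b s t, X (a, s) (b, t) = if s = t then A a b else B a b) :
    X.det = (A + B).det * (A - B).det := by
  have h1 : X.submatrix (sumProdBool V) (sumProdBool V) = fromBlocks A B B A := by
    ext i j
    rcases i with i | i <;> rcases j with j | j <;>
      simp [sumProdBool, fromBlocks, hX]
  have h2 : X.det = (fromBlocks A B B A).det := by
    rw [← Matrix.det_submatrix_equiv_self (sumProdBool V) X, h1]
  set U : Matrix (V ⊕ V) (V ⊕ V) ℝ := fromBlocks 1 1 0 1 with hU
  set W : Matrix (V ⊕ V) (V ⊕ V) ℝ := fromBlocks 1 (-1) 0 1 with hW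
  have hUdet : U.det = 1 := by rw [hU, Matrix.det_fromBlocks_zero₂₁]; simp
  have hWdet : W.det = 1 := by rw [hW, Matrix.det_fromBlocks_zero₂₁]; simp
  have hmul : U * (fromBlocks A B B A) * W = fromBlocks (A + B) 0 B (A - B) := by
    rw [hU, hW, Matrix.fromBlocks_multiply, Matrix.fromBlocks_multiply]
    congr 1 <;> simp <;> try abel
  have := congrArg Matrix.det hmul
  rw [Matrix.det_mul, Matrix.det_mul, hUdet, hWdet, Matrix.det_fromBlocks_zero₁₂] at this
  rw [h2]
  linarith [this]

open scoped Classical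

lemma adjSP_iff {V : Type*} (G : SimpleGraph V) (a b : V × Bool) :
    (strongPrism G).Adj a b ↔ a ≠ b ∧ (a.1 = b.1 ∨ G.Adj a.1 b.1) := by
  simp only [strongPrism, SimpleGraph.fromRel_adj]
  constructor
  · rintro ⟨h, (h'|h') | (h'|h')⟩ <;> exact ⟨h, by tauto⟩ <;> try exact ⟨h, Or.inr h'.symm⟩
  · rintro ⟨h, h'⟩; exact ⟨h, Or.inl h'⟩

lemma adjB_iff (n : ℕ) (i j : Fin (n+1)) (b c : Bool) :
    (Bgraph n).Adj (i, b) (j, c) ↔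
      (b = c ∧ (i.val + 1 = j.val ∨ j.val + 1 = i.val)) ∨ (i = j ∧ b ≠ c) := by
  simp only [Bgraph, SimpleGraph.fromRel_adj, Prod.mk.injEq, ne_eq, not_and, Fin.ext_iff]
  cases b <;> cases c <;> simp <;> omega

lemma sp_neighborFinset {V : Type*} [Fintype V] [DecidableEq V] (G : SimpleGraph V)
    [DecidableRel G.Adj] (v : V) (s : Bool)
    [Fintype ((strongPrism G).neighborSet (v, s))] :
    (strongPrism G).neighborFinset (v, s)
      = insert (v, !s) ((G.neighborFinset v) ×ˢ (Finset.univ : Finset Bool)) := by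
  ext ⟨w, t⟩
  simp only [SimpleGraph.mem_neighborFinset, adjSP_iff, Finset.mem_insert,
    Finset.mem_product, Finset.mem_univ, and_true, SimpleGraph.mem_neighborFinset,
    Prod.mk.injEq, ne_eq]
  constructor
  · rintro ⟨hne, (rfl | h)⟩
    · left; exact ⟨rfl, by cases s <;> cases t <;> simp_all⟩
    · right; exact h
  · rintro (⟨rfl, rfl⟩ | h)
    · exact ⟨by simp, Or.inl rfl⟩
    · exact ⟨fun he => G.ne_of_adj h he.1, Or.inr h⟩

lemma sp_degree {V : Type*} [Fintype V] [DecidableEq V] (G : SimpleGraph V)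
    [DecidableRel G.Adj] (v : V) (s : Bool)
    [Fintype ((strongPrism G).neighborSet (v, s))] :
    (strongPrism G).degree (v, s) = 2 * G.degree v + 1 := by
  have hnm : (v, !s) ∉ (G.neighborFinset v) ×ˢ (Finset.univ : Finset Bool) := by simp
  have : (strongPrism G).degree (v, s) = (insert (v, !s)
      ((G.neighborFinset v) ×ˢ (Finset.univ : Finset Bool))).card := by
    rw [← sp_neighborFinset]; rfl
  rw [this, Finset.card_insert_of_notMem hnm, Finset.card_product, Finset.card_univ,
    Fintype.card_bool]
  have : (G.neighborFinset v).card = G.degree v := rfl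
  omega

lemma b_mem_nf (n : ℕ) (i j : Fin (n+1)) (b c : Bool)
    [Fintype ((Bgraph n).neighborSet (i, b))] :
    (j, c) ∈ (Bgraph n).neighborFinset (i, b) ↔
      ((c = b ∧ (i.val + 1 = j.val ∨ j.val + 1 = i.val)) ∨ (j = i ∧ c = !b)) := by
  rw [SimpleGraph.mem_neighborFinset, adjB_iff]
  cases b <;> cases c <;> simp [Fin.ext_iff] <;> omega

lemma b_degree (n : ℕ) (hn : 2 ≤ n) (i : Fin (n+1)) (b : Bool)
    [Fintype ((Bgraph n).neighborSet (i, b))] :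
    (Bgraph n).degree (i, b) = if i.val = 0 ∨ i.val = n then 2 else 3 := by
  have hdeg : (Bgraph n).degree (i, b) = ((Bgraph n).neighborFinset (i, b)).card := rfl
  by_cases h0 : i.val = 0
  · have hF : (Bgraph n).neighborFinset (i, b)
        = insert ((⟨1, by omega⟩ : Fin (n+1)), b) {(i, !b)} := by
      ext ⟨j, c⟩
      rw [b_mem_nf]
      cases b <;> cases c <;> simp [Prod.ext_iff, Fin.ext_iff] <;> omega
    rw [hdeg, hF, Finset.card_insert_of_notMem (by cases b <;> simp),
      Finset.card_singleton]
    simp [h0]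
  · by_cases hN : i.val = n
    · have hF : (Bgraph n).neighborFinset (i, b)
          = insert ((⟨n - 1, by omega⟩ : Fin (n+1)), b) {(i, !b)} := by
        ext ⟨j, c⟩
        rw [b_mem_nf]
        cases b <;> cases c <;> simp [Prod.ext_iff, Fin.ext_iff] <;> omega
      rw [hdeg, hF, Finset.card_insert_of_notMem (by cases b <;> simp),
        Finset.card_singleton]
      simp [hN]
    · have hF : (Bgraph n).neighborFinset (i, b)
          = insert ((⟨i.val - 1, by omega⟩ : Fin (n+1)), b)
              (insert ((⟨i.val + 1, by omega⟩ : Fin (n+1)), b) {(i, !b)}) := by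
        ext ⟨j, c⟩
        rw [b_mem_nf]
        cases b <;> cases c <;> simp [Prod.ext_iff, Fin.ext_iff] <;> omega
      rw [hdeg, hF, Finset.card_insert_of_notMem, Finset.card_insert_of_notMem
        (by cases b <;> simp [Prod.ext_iff, Fin.ext_iff] <;> omega),
        Finset.card_singleton]
      · simp [h0, hN]
      · cases b <;> simp [Prod.ext_iff, Fin.ext_iff] <;> omega

noncomputable def Dv (n : ℕ) : Fin (n+1) → ℝ := fun i => if i.val = 0 ∨ i.val = n then 5 else 7

open Classical in
noncomputable def Pm (n : ℕ) (x : ℝ) : Matrix (Fin (n+1) × Bool) (Fin (n+1) × Bool) ℝ :=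
  fun a b => if a = b then x - 1
    else if (Bgraph n).Adj a b then 1 / Real.sqrt (Dv n a.1 * Dv n b.1) else 0

open Classical in
noncomputable def Qm (n : ℕ) : Matrix (Fin (n+1) × Bool) (Fin (n+1) × Bool) ℝ :=
  fun a b => if a = b then 1 / Real.sqrt (Dv n a.1 * Dv n a.1)
    else if (Bgraph n).Adj a b then 1 / Real.sqrt (Dv n a.1 * Dv n b.1) else 0

lemma sp_degree_cast (n : ℕ) (hn : 2 ≤ n) (a : Fin (n+1) × Bool) (s : Bool)
    [Fintype ((strongPrism (Bgraph n)).neighborSet (a, s))] :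
    (((strongPrism (Bgraph n)).degree (a, s) : ℕ) : ℝ) = Dv n a.1 := by
  classical
  obtain ⟨i, b⟩ := a
  rw [sp_degree, b_degree n hn]
  unfold Dv
  split_ifs <;> norm_num

lemma entry_lemma (n : ℕ) (hn : 2 ≤ n) (x : ℝ) (a b : Fin (n+1) × Bool) (s t : Bool) :
    (x • (1 : Matrix ((Fin (n+1) × Bool) × Bool) ((Fin (n+1) × Bool) × Bool) ℝ)
        - normLap (strongPrism (Bgraph n))) ((a, s)) ((b, t))
      = if s = t then Pm n x a b else Qm n a b := by
  classical
  rw [Matrix.sub_apply, Matrix.smul_apply, Matrix.one_apply]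
  have hdeg : ∀ (c : Fin (n+1) × Bool) (u : Bool),
      (((strongPrism (Bgraph n)).degree (c, u) : ℕ) : ℝ) = Dv n c.1 :=
    fun c u => sp_degree_cast n hn c u
  simp only [normLap, Matrix.of_apply, smul_eq_mul]
  by_cases hst : s = t
  · subst hst
    by_cases hab : a = b
    · subst hab
      simp [Pm]
    · have hpq : ((a, s) : (Fin (n+1) × Bool) × Bool) ≠ (b, s) := by
        simp [hab]
      have hadj : (strongPrism (Bgraph n)).Adj (a, s) (b, s) ↔ (Bgraph n).Adj a b := by
        rw [adjSP_iff]
        simp [hab]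
      rw [if_neg hpq, if_neg hpq, if_pos rfl]
      simp only [hdeg, Pm]
      rw [if_neg hab]
      by_cases h : (Bgraph n).Adj a b
      · rw [if_pos (hadj.mpr h), if_pos h]; ring
      · rw [if_neg (fun hh => h (hadj.mp hh)), if_neg h]; ring
  · have hpq : ((a, s) : (Fin (n+1) × Bool) × Bool) ≠ (b, t) := by
      simp [Prod.ext_iff]; tauto
    rw [if_neg hst, if_neg hpq, if_neg hpq]
    have hadj : (strongPrism (Bgraph n)).Adj (a, s) (b, t) ↔ (a = b ∨ (Bgraph n).Adj a b) := by
      rw [adjSP_iff]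
      simp [hpq]
    simp only [hdeg, Qm]
    by_cases hab : a = b
    · subst hab
      rw [if_pos (hadj.mpr (Or.inl rfl)), if_pos rfl]; ring
    · rw [if_neg hab]
      by_cases h : (Bgraph n).Adj a b
      · rw [if_pos (hadj.mpr (Or.inr h)), if_pos h]; ring
      · rw [if_neg (fun hh => by rcases hadj.mp hh with h'|h' <;> [exact hab h'; exact h h']),
          if_neg h]; ring

noncomputable def P2 (n : ℕ) (x : ℝ) : Matrix (Fin (n+1)) (Fin (n+1)) ℝ :=
  fun i j => if i = j then x - 1 + 1 / Real.sqrt (Dv n i * Dv n i)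
    else if i.val + 1 = j.val ∨ j.val + 1 = i.val then 2 / Real.sqrt (Dv n i * Dv n j) else 0

noncomputable def Q2 (n : ℕ) : Matrix (Fin (n+1)) (Fin (n+1)) ℝ :=
  fun i j => if i = j then 2 / Real.sqrt (Dv n i * Dv n i) else 0

lemma entry_lemma2 (n : ℕ) (x : ℝ) (i j : Fin (n+1)) (b c : Bool) :
    (Pm n x + Qm n) ((i, b)) ((j, c)) = if b = c then P2 n x i j else Q2 n i j := by
  classical
  rw [Matrix.add_apply]
  simp only [Pm, Qm, P2, Q2, adjB_iff]
  by_cases hbc : b = c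
  · subst hbc
    by_cases hij : i = j
    · subst hij; simp
    · have h1 : ((i, b) : Fin (n+1) × Bool) ≠ (j, b) := by simp [hij]
      rw [if_neg h1, if_neg h1, if_pos rfl, if_neg hij]
      by_cases hadj : i.val + 1 = j.val ∨ j.val + 1 = i.val
      · rw [if_pos (Or.inl ⟨rfl, hadj⟩ :
          ((b = b ∧ (i.val + 1 = j.val ∨ j.val + 1 = i.val)) ∨ (i = j ∧ b ≠ b))),
          if_pos hadj]; ring
      · rw [if_neg (fun hh => by rcases hh with ⟨-, h⟩ | ⟨h, -⟩ <;> [exact hadj h; exact hij h] :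
          ¬((b = b ∧ (i.val + 1 = j.val ∨ j.val + 1 = i.val)) ∨ (i = j ∧ b ≠ b))),
          if_neg hadj]; ring
  · have h1 : ((i, b) : Fin (n+1) × Bool) ≠ (j, c) := by simp [hbc]
    rw [if_neg h1, if_neg h1, if_neg hbc]
    by_cases hij : i = j
    · subst hij
      rw [if_pos (Or.inr ⟨rfl, hbc⟩ :
        ((b = c ∧ (i.val + 1 = i.val ∨ i.val + 1 = i.val)) ∨ (i = i ∧ b ≠ c))),
        if_pos rfl]; ring
    · rw [if_neg (fun hh => by rcases hh with ⟨h, -⟩ | ⟨h, -⟩ <;> [exact hbc h; exact hij h] :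
        ¬((b = c ∧ (i.val + 1 = j.val ∨ j.val + 1 = i.val)) ∨ (i = j ∧ b ≠ c))),
        if_neg hij]; ring

lemma sqrt55 : Real.sqrt (5 * 5 : ℝ) = 5 := by
  rw [show (5 * 5 : ℝ) = 5 ^ 2 by norm_num, Real.sqrt_sq (by norm_num : (0:ℝ) ≤ 5)]

lemma sqrt77 : Real.sqrt (7 * 7 : ℝ) = 7 := by
  rw [show (7 * 7 : ℝ) = 7 ^ 2 by norm_num, Real.sqrt_sq (by norm_num : (0:ℝ) ≤ 7)]

lemma sqrt25 : Real.sqrt (25 : ℝ) = 5 := by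
  rw [show (25 : ℝ) = 5 ^ 2 by norm_num, Real.sqrt_sq (by norm_num : (0:ℝ) ≤ 5)]

lemma sqrt49 : Real.sqrt (49 : ℝ) = 7 := by
  rw [show (49 : ℝ) = 7 ^ 2 by norm_num, Real.sqrt_sq (by norm_num : (0:ℝ) ≤ 7)]

lemma prod_mul_lemma (n : ℕ) (hn : 2 ≤ n) (i j : Fin (n+1))
    (hij : i ≠ j) (hadj : i.val + 1 = j.val ∨ j.val + 1 = i.val) :
    Real.sqrt (Dv n i * Dv n j)
      = if min i.val j.val = 0 ∨ max i.val j.val = n then Real.sqrt 35 else 7 := by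
  have hij' : i.val ≠ j.val := fun h => hij (Fin.ext h)
  have hi := i.isLt
  have hj := j.isLt
  unfold Dv
  split_ifs with h1 h2 h3 h2 h3 <;> first
    | (exfalso; omega)
    | (rw [show ((5:ℝ) * 7) = 35 by norm_num])
    | (rw [show ((7:ℝ) * 5) = 35 by norm_num])
    | (exact sqrt77)

lemma PQ2_eq_M (n : ℕ) (hn : 2 ≤ n) (x : ℝ) :
    P2 n x + Q2 n = x • (1 : Matrix (Fin (n+1)) (Fin (n+1)) ℝ) - (2 : ℝ) • Mmat n := by
  ext i j
  simp only [Matrix.add_apply, Matrix.sub_apply, Matrix.smul_apply, Matrix.one_apply,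
    Mmat, Matrix.of_apply, smul_eq_mul, P2, Q2]
  by_cases hij : i = j
  · subst hij
    rw [if_pos rfl]
    simp only [if_pos rfl]
    unfold Dv
    split_ifs <;> first | (rw [sqrt55]; ring) | (rw [sqrt77]; ring) | (rw [sqrt25]; ring) | (rw [sqrt49]; ring) | ring | omega | simp_all
  · by_cases hadj : i.val + 1 = j.val ∨ j.val + 1 = i.val
    · have hsq := prod_mul_lemma n hn i j hij hadj
      by_cases hmm : min i.val j.val = 0 ∨ max i.val j.val = n
      · rw [if_pos hmm] at hsq
        simp only [hij, hadj, hmm, if_true, if_false, ite_true, ite_false, hsq]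
        ring
      · rw [if_neg hmm] at hsq
        simp only [hij, hadj, hmm, if_true, if_false, ite_true, ite_false, hsq]
        ring
    · simp only [hij, hadj, if_true, if_false, ite_true, ite_false]
      ring

lemma PQ2_eq_N (n : ℕ) (hn : 2 ≤ n) (x : ℝ) :
    P2 n x - Q2 n = x • (1 : Matrix (Fin (n+1)) (Fin (n+1)) ℝ) - (2 : ℝ) • Nmat n := by
  ext i j
  simp only [Matrix.sub_apply, Matrix.smul_apply, Matrix.one_apply,
    Nmat, Matrix.of_apply, smul_eq_mul, P2, Q2]
  by_cases hij : i = j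
  · subst hij
    rw [if_pos rfl]
    simp only [if_pos rfl]
    unfold Dv
    split_ifs <;> first | (rw [sqrt55]; ring) | (rw [sqrt77]; ring) | (rw [sqrt25]; ring) | (rw [sqrt49]; ring) | ring | omega | simp_all
  · by_cases hadj : i.val + 1 = j.val ∨ j.val + 1 = i.val
    · have hsq := prod_mul_lemma n hn i j hij hadj
      by_cases hmm : min i.val j.val = 0 ∨ max i.val j.val = n
      · rw [if_pos hmm] at hsq
        simp only [hij, hadj, hmm, if_true, if_false, ite_true, ite_false, hsq]
        ring
      · rw [if_neg hmm] at hsq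
        simp only [hij, hadj, hmm, if_true, if_false, ite_true, ite_false, hsq]
        ring
    · simp only [hij, hadj, if_true, if_false, ite_true, ite_false]
      ring

lemma PmQm_diag (n : ℕ) (x : ℝ) :
    Pm n x - Qm n
      = Matrix.diagonal (fun a : Fin (n+1) × Bool => x - 1 - 1 / Dv n a.1) := by
  ext a b
  by_cases hab : a = b
  · subst hab
    rw [Matrix.sub_apply, Matrix.diagonal_apply_eq]
    have hP : Pm n x a a = x - 1 := by simp [Pm]
    have hQ : Qm n a a = 1 / Real.sqrt (Dv n a.1 * Dv n a.1) := by simp [Qm]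
    rw [hP, hQ]
    unfold Dv
    split_ifs
    all_goals first | (rw [sqrt55]; try ring) | (rw [sqrt77]; try ring)
  · rw [Matrix.sub_apply, Matrix.diagonal_apply_ne _ hab]
    simp only [Pm, Qm, if_neg hab]
    split_ifs <;> ring

lemma det_diag_part (n : ℕ) (hn : 2 ≤ n) (x : ℝ) :
    (Pm n x - Qm n).det = (x - 6/5)^4 * (x - 8/7)^(2*n-2) := by
  rw [PmQm_diag n x, Matrix.det_diagonal]
  have h1 : ∀ i : Fin (n+1),
      x - 1 - 1 / Dv n i = if i.val = 0 ∨ i.val = n then x - 6/5 else x - 8/7 := by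
    intro i; unfold Dv; split_ifs <;> ring
  rw [Fintype.prod_prod_type]
  have h2 : ∀ i : Fin (n+1), ∏ _b : Bool, (x - 1 - 1 / Dv n i)
      = (if i.val = 0 ∨ i.val = n then x - 6/5 else x - 8/7) ^ 2 := by
    intro i
    rw [Finset.prod_const, Finset.card_univ, Fintype.card_bool, h1 i]
  rw [Finset.prod_congr rfl (fun i _ => h2 i), Finset.prod_pow]
  have hcard : (Finset.univ.filter (fun i : Fin (n+1) => i.val = 0 ∨ i.val = n)).card = 2 := by
    have : (Finset.univ.filter (fun i : Fin (n+1) => i.val = 0 ∨ i.val = n))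
        = {(⟨0, by omega⟩ : Fin (n+1)), ⟨n, by omega⟩} := by
      ext i
      simp only [Finset.mem_filter, Finset.mem_univ, true_and, Finset.mem_insert,
        Finset.mem_singleton, Fin.ext_iff, Fin.val_mk]
    rw [this, Finset.card_insert_of_notMem (by simp [Fin.ext_iff]; omega),
      Finset.card_singleton]
  have hcard2 : (Finset.univ.filter (fun i : Fin (n+1) => ¬(i.val = 0 ∨ i.val = n))).card
      = n - 1 := by
    have := Finset.card_filter_add_card_filter_not (s := (Finset.univ : Finset (Fin (n+1))))
      (p := fun i : Fin (n+1) => i.val = 0 ∨ i.val = n)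
    rw [hcard, Finset.card_univ, Fintype.card_fin] at this
    omega
  rw [Finset.prod_ite, Finset.prod_const, Finset.prod_const, hcard, hcard2, mul_pow,
    ← pow_mul, ← pow_mul, show (2 : ℕ) * 2 = 4 by norm_num, show (n-1) * 2 = 2*n-2 by omega]


/-- For `n ≥ 2`, the normalized Laplacian characteristic polynomial of `B_n²`
factors as `det(xI − ℒ(B_n²)) = (x − 6/5)⁴ (x − 8/7)^{2n−2} det(xI − 2M) det(xI − 2N)`. -/
theorem normLap_strongPrism_charpoly_factorization (n : ℕ) (hn : 2 ≤ n) (x : ℝ) :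
    (x • (1 : Matrix ((Fin (n+1) × Bool) × Bool) ((Fin (n+1) × Bool) × Bool) ℝ)
        - normLap (strongPrism (Bgraph n))).det
      = (x - 6/5)^4 * (x - 8/7)^(2*n-2)
        * (x • (1 : Matrix (Fin (n+1)) (Fin (n+1)) ℝ) - (2 : ℝ) • Mmat n).det
        * (x • (1 : Matrix (Fin (n+1)) (Fin (n+1)) ℝ) - (2 : ℝ) • Nmat n).det := by
  rw [det_block_swap (Pm n x) (Qm n) _ (fun a b s t => entry_lemma n hn x a b s t),
    det_block_swap (P2 n x) (Q2 n) (Pm n x + Qm n) (fun i j b c => entry_lemma2 n x i j b c),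
    PQ2_eq_M n hn x, PQ2_eq_N n hn x, det_diag_part n hn x]
  ring
end

section
/- Let n ≥ 2. For every 1 ≤ i ≤ n, the determinant of the leading principal i×i submatrix of M (formed by its first i rows and columns) equals (1/5)·(1/7)^{i−1}. -/
open Matrix

/-- Upper bidiagonal "Cholesky factor" of the leading principal block. -/
noncomputable def Umat (i : ℕ) : Matrix (Fin i) (Fin i) ℝ :=
  Matrix.of fun j k =>
    if j = k then (if j.val = 0 then 1/Real.sqrt 5 else 1/Real.sqrt 7)
    else if j.val + 1 = k.val then -(1/Real.sqrt 7) else 0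

lemma s5_pos : (0:ℝ) < Real.sqrt 5 := Real.sqrt_pos.2 (by norm_num)
lemma s7_pos : (0:ℝ) < Real.sqrt 7 := Real.sqrt_pos.2 (by norm_num)
lemma s35_pos : (0:ℝ) < Real.sqrt 35 := Real.sqrt_pos.2 (by norm_num)
lemma s35 : Real.sqrt 35 = Real.sqrt 5 * Real.sqrt 7 := by
  rw [← Real.sqrt_mul (by norm_num : (0:ℝ) ≤ 5)]; norm_num
lemma s5sq : Real.sqrt 5 * Real.sqrt 5 = 5 := Real.mul_self_sqrt (by norm_num)
lemma s7sq : Real.sqrt 7 * Real.sqrt 7 = 7 := Real.mul_self_sqrt (by norm_num)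

/-- The leading principal `i × i` block of `M` factors as `Uᵀ * U`. -/
lemma key (n i : ℕ) (h2 : i ≤ n) :
    ((Mmat n).submatrix (Fin.castLE (Nat.le_succ_of_le h2))
        (Fin.castLE (Nat.le_succ_of_le h2)))
      = (Umat i)ᵀ * (Umat i) := by
  ext j k
  have hj : j.val < n := lt_of_lt_of_le j.isLt h2
  have hk : k.val < n := lt_of_lt_of_le k.isLt h2
  simp only [Matrix.submatrix_apply, Matrix.mul_apply, Matrix.transpose_apply]
  rcases Nat.eq_zero_or_pos j.val with hj0 | hj0
  · rw [Finset.sum_eq_single j ?_ (by simp)]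
    · simp only [Mmat, Umat, Matrix.of_apply, Fin.castLE_inj, Fin.coe_castLE, Fin.ext_iff]
      split_ifs <;>
        first | rfl | omega | ring1 | (field_simp [s5_pos.ne', s7_pos.ne', s35_pos.ne'] <;> nlinarith [s35, s5sq, s7sq])
    · intro m _ hm
      simp only [Umat, Matrix.of_apply, if_neg hm]
      rw [if_neg (by omega)]
      exact zero_mul _
  · obtain ⟨p, hp⟩ : ∃ p, j.val = p + 1 := ⟨j.val - 1, by omega⟩
    have hpi : p < i := by omega
    set jp : Fin i := ⟨p, hpi⟩ with hjp
    rw [Finset.sum_eq_add_of_mem jp j (Finset.mem_univ _) (Finset.mem_univ _)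
        (by simp [Fin.ext_iff, hjp]; omega) ?_]
    · simp only [Mmat, Umat, Matrix.of_apply, Fin.castLE_inj, Fin.coe_castLE, Fin.ext_iff, hjp]
      split_ifs <;>
        first | rfl | omega | ring1 | (field_simp [s5_pos.ne', s7_pos.ne', s35_pos.ne'] <;> nlinarith [s35, s5sq, s7sq])
    · intro m _ hm
      simp only [Umat, Matrix.of_apply]
      rw [if_neg (by exact hm.2), if_neg (by simp [Fin.ext_iff, hjp] at hm ⊢; omega)]
      exact zero_mul _

lemma detU (m : ℕ) : (Umat (m+1)).det = (1/Real.sqrt 5) * (1/Real.sqrt 7)^m := by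
  rw [Matrix.det_of_upperTriangular]
  · rw [Fin.prod_univ_succ]
    have h0 : Umat (m+1) 0 0 = 1/Real.sqrt 5 := by simp [Umat]
    have hs : ∀ j : Fin m, Umat (m+1) j.succ j.succ = 1/Real.sqrt 7 := by
      intro j; simp only [Umat, Matrix.of_apply]; rw [if_pos trivial, if_neg (by simp)]
    rw [h0]
    simp only [hs]
    rw [Finset.prod_const]
    simp
  · intro a b hba
    have hb : (b:ℕ) < (a:ℕ) := hba
    simp only [Umat, Matrix.of_apply]
    rw [if_neg (by simp [Fin.ext_iff]; omega), if_neg (by omega)]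

/-- For `n ≥ 2` and `1 ≤ i ≤ n`, the leading principal `i × i` minor of `M`
equals `(1/5)·(1/7)^(i−1)`. -/
theorem det_leading_principal_submatrix_Mmat (n : ℕ) (hn : 2 ≤ n)
    (i : ℕ) (h1 : 1 ≤ i) (h2 : i ≤ n) :
    ((Mmat n).submatrix (Fin.castLE (show i ≤ n + 1 by omega))
        (Fin.castLE (show i ≤ n + 1 by omega))).det
      = (1/5) * (1/7)^(i-1) := by
  obtain ⟨m, rfl⟩ : ∃ m, i = m + 1 := ⟨i - 1, by omega⟩
  rw [key n (m+1) h2, Matrix.det_mul, Matrix.det_transpose, detU]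
  have h7 : ((1:ℝ)/Real.sqrt 7)^m * (1/Real.sqrt 7)^m = (1/7)^m := by
    rw [← mul_pow, div_mul_div_comm, s7sq]; norm_num
  simp only [Nat.add_sub_cancel]
  calc (1/Real.sqrt 5 * (1/Real.sqrt 7)^m) * (1/Real.sqrt 5 * (1/Real.sqrt 7)^m)
      = (1/Real.sqrt 5 * (1/Real.sqrt 5)) * ((1/Real.sqrt 7)^m * (1/Real.sqrt 7)^m) := by ring
    _ = (1/5) * (1/7)^m := by rw [h7, div_mul_div_comm, s5sq]; norm_num
end

section
/- Let n ≥ 2 and write det(xI − M) = x^{n+1} + a_1 x^n + … + a_{n−1} x² + a_n x (the constant term vanishes). Then (−1)^n a_n = (7n+3)/25 · (1/7)^{n−1}; equivalently, the coefficient of x^1 in the characteristic polynomial of M equals (−1)^n · (7n+3)/(25 · 7^{n−1}), i.e., the sum of all n×n principal minors of M equals (7n+3)/(25 · 7^{n−1}). -/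
open Polynomial Matrix


noncomputable def Hmat (k : ℕ) : Matrix (Fin k) (Fin k) (Polynomial ℝ) :=
  Matrix.of fun i j =>
    if i.val = j.val then (if i.val + 1 = k then X - C (1/5) else X - C (2/7))
    else if i.val + 1 = j.val ∨ j.val + 1 = i.val then
      (if max i.val j.val + 1 = k then C (1/Real.sqrt 35) else C (1/7))
    else 0

lemma det_Hmat_rec (k : ℕ) (hk : 1 ≤ k) :
    (Hmat (k+2)).det
      = (X - C (2/7)) * (Hmat (k+1)).det - C (1/49) * (Hmat k).det := by
  have hk0 : k ≠ 0 := by omega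
  have h00 : Hmat (k+2) 0 0 = X - C (2/7) := by
    have h1 : ¬ ((0:ℕ) + 1 = k + 2) := by omega
    simp [Hmat, h1]
  have h01 : Hmat (k+2) 0 1 = C (1/7) := by simp [Hmat, hk0]
  have hsub0 : (Hmat (k+2)).submatrix Fin.succ ((0 : Fin (k+2)).succAbove) = Hmat (k+1) := by
    rw [Fin.succAbove_zero]
    ext p q
    simp only [Matrix.submatrix_apply, Hmat, Matrix.of_apply]
    split_ifs <;> first | rfl |
      ((simp only [Fin.coe_castSucc, Fin.val_succ, Fin.castSucc_zero, Fin.succ_zero_eq_one,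
          Fin.val_zero, Fin.val_one, Fin.succAbove, Fin.lt_def] at *) <;> omega)
  have hsub1 :
      ((Hmat (k+2)).submatrix Fin.succ ((1 : Fin (k+2)).succAbove)).det
        = C (1/7) * (Hmat k).det := by
    rw [Matrix.det_succ_column_zero]
    rw [Fin.sum_univ_succ]
    have hcol : ∀ i : Fin k,
        (Hmat (k+2)).submatrix Fin.succ ((1 : Fin (k+2)).succAbove) i.succ 0 = 0 := by
      intro i
      simp only [Matrix.submatrix_apply, Hmat, Matrix.of_apply, Fin.succAbove, Fin.lt_def]
      split_ifs <;> first | rfl |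
        ((simp only [Fin.coe_castSucc, Fin.val_succ, Fin.castSucc_zero, Fin.succ_zero_eq_one,
            Fin.val_zero, Fin.val_one, not_or, not_true, and_false, false_and, and_true, true_and, or_true, true_or, or_false, false_or] at *) <;> omega)
    have hentry : (Hmat (k+2)).submatrix Fin.succ ((1 : Fin (k+2)).succAbove) 0 0 = C (1/7) := by
      simp only [Matrix.submatrix_apply, Hmat, Matrix.of_apply, Fin.succAbove, Fin.lt_def]
      split_ifs <;> first | rfl |
        ((simp only [Fin.coe_castSucc, Fin.val_succ, Fin.castSucc_zero, Fin.succ_zero_eq_one,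
            Fin.val_zero, Fin.val_one, not_or, not_true, and_false, false_and, and_true, true_and, or_true, true_or, or_false, false_or] at *) <;> omega)
    rw [hentry]
    have hinner :
        ((Hmat (k+2)).submatrix Fin.succ ((1 : Fin (k+2)).succAbove)).submatrix
          ((0 : Fin (k+1)).succAbove) Fin.succ = Hmat k := by
      rw [Fin.succAbove_zero]
      ext p q
      simp only [Matrix.submatrix_apply, Hmat, Matrix.of_apply, Fin.succAbove, Fin.lt_def]
      split_ifs <;> first | rfl |
        ((simp only [Fin.coe_castSucc, Fin.val_succ, Fin.castSucc_zero, Fin.succ_zero_eq_one,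
            Fin.val_zero, Fin.val_one, not_or, not_true, and_false, false_and, and_true, true_and, or_true, true_or, or_false, false_or] at *) <;> omega)
    rw [hinner]
    simp only [Fin.val_zero, pow_zero, one_mul]
    rw [Finset.sum_eq_zero (fun i _ => by rw [hcol i]; ring)]
    ring
  rw [Matrix.det_succ_row_zero, Fin.sum_univ_succ, Fin.sum_univ_succ]
  have hrow : ∀ j : Fin k, Hmat (k+2) 0 j.succ.succ = 0 := by
    intro j
    simp only [Hmat, Matrix.of_apply]
    split_ifs <;> first | rfl |
      ((simp only [Fin.coe_castSucc, Fin.val_succ, Fin.castSucc_zero, Fin.succ_zero_eq_one,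
          Fin.val_zero, Fin.val_one, not_or, not_true, and_false, false_and, and_true, true_and, or_true, true_or, or_false, false_or] at *) <;> omega)
  rw [Finset.sum_eq_zero (fun j _ => by rw [hrow j]; ring)]
  rw [Fin.succ_zero_eq_one, h00, h01, hsub0, hsub1]
  have hC : C (1/7 : ℝ) * C (1/7 : ℝ) = C (1/49) := by
    rw [← C_mul]; norm_num
  simp only [Fin.val_zero, Fin.val_one, pow_zero, pow_one]
  ring_nf
  rw [show (C (1/7 :ℝ)) ^ 2 = C (1/49) by rw [sq]; exact hC]
  ring

noncomputable def Gmat (n : ℕ) : Matrix (Fin (n+1)) (Fin (n+1)) (Polynomial ℝ) :=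
  Matrix.of fun i j =>
    if i.val = j.val then (if i.val = 0 ∨ i.val = n then X - C (1/5) else X - C (2/7))
    else if i.val + 1 = j.val ∨ j.val + 1 = i.val then
      (if min i.val j.val = 0 ∨ max i.val j.val = n then C (1/Real.sqrt 35) else C (1/7))
    else 0

lemma charmatrix_Mmat (n : ℕ) : charmatrix (Mmat n) = Gmat n := by
  ext i j
  rcases eq_or_ne i j with rfl | h
  · rw [charmatrix_apply_eq]
    simp only [Mmat, Gmat, Matrix.of_apply, if_pos rfl]
    split_ifs <;> simp
  · rw [charmatrix_apply_ne _ _ _ h]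
    have h' : ¬ (i.val = j.val) := fun hh => h (Fin.ext hh)
    simp only [Mmat, Gmat, Matrix.of_apply, if_neg h, if_neg h']
    split_ifs <;> simp

lemma det_Gmat (m : ℕ) :
    (Gmat (m+2)).det
      = (X - C (1/5)) * (Hmat (m+2)).det - C (1/35) * (Hmat (m+1)).det := by
  have h00 : Gmat (m+2) 0 0 = X - C (1/5) := by simp [Gmat]
  have h01 : Gmat (m+2) 0 1 = C (1/Real.sqrt 35) := by simp [Gmat]
  have hsub0 : (Gmat (m+2)).submatrix Fin.succ ((0 : Fin (m+3)).succAbove) = Hmat (m+2) := by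
    rw [Fin.succAbove_zero]
    ext p q
    simp only [Matrix.submatrix_apply, Gmat, Hmat, Matrix.of_apply]
    split_ifs <;> first | rfl |
      ((simp only [Fin.coe_castSucc, Fin.val_succ, Fin.castSucc_zero, Fin.succ_zero_eq_one,
          Fin.val_zero, Fin.val_one, not_or, not_true, and_false, false_and, and_true, true_and,
          or_true, true_or, or_false, false_or] at *) <;> omega)
  have hsub1 :
      ((Gmat (m+2)).submatrix Fin.succ ((1 : Fin (m+3)).succAbove)).det
        = C (1/Real.sqrt 35) * (Hmat (m+1)).det := by
    rw [Matrix.det_succ_column_zero, Fin.sum_univ_succ]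
    have hcol : ∀ i : Fin (m+1),
        (Gmat (m+2)).submatrix Fin.succ ((1 : Fin (m+3)).succAbove) i.succ 0 = 0 := by
      intro i
      simp only [Matrix.submatrix_apply, Gmat, Matrix.of_apply, Fin.succAbove, Fin.lt_def]
      split_ifs <;> first | rfl |
        ((simp only [Fin.coe_castSucc, Fin.val_succ, Fin.castSucc_zero, Fin.succ_zero_eq_one,
            Fin.val_zero, Fin.val_one, not_or, not_true, and_false, false_and, and_true, true_and,
            or_true, true_or, or_false, false_or] at *) <;> omega)
    have hentry : (Gmat (m+2)).submatrix Fin.succ ((1 : Fin (m+3)).succAbove) 0 0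
        = C (1/Real.sqrt 35) := by
      simp only [Matrix.submatrix_apply, Gmat, Matrix.of_apply, Fin.succAbove, Fin.lt_def]
      split_ifs <;> first | rfl |
        ((simp only [Fin.coe_castSucc, Fin.val_succ, Fin.castSucc_zero, Fin.succ_zero_eq_one,
            Fin.val_zero, Fin.val_one, not_or, not_true, and_false, false_and, and_true, true_and,
            or_true, true_or, or_false, false_or] at *) <;> omega)
    rw [hentry]
    have hinner :
        ((Gmat (m+2)).submatrix Fin.succ ((1 : Fin (m+3)).succAbove)).submatrix
          ((0 : Fin (m+2)).succAbove) Fin.succ = Hmat (m+1) := by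
      rw [Fin.succAbove_zero]
      ext p q
      simp only [Matrix.submatrix_apply, Gmat, Hmat, Matrix.of_apply, Fin.succAbove, Fin.lt_def]
      split_ifs <;> first | rfl |
        ((simp only [Fin.coe_castSucc, Fin.val_succ, Fin.castSucc_zero, Fin.succ_zero_eq_one,
            Fin.val_zero, Fin.val_one, not_or, not_true, and_false, false_and, and_true, true_and,
            or_true, true_or, or_false, false_or] at *) <;> omega)
    rw [hinner]
    simp only [Fin.val_zero, pow_zero, one_mul]
    rw [Finset.sum_eq_zero (fun i _ => by rw [hcol i]; ring)]
    ring
  rw [Matrix.det_succ_row_zero, Fin.sum_univ_succ, Fin.sum_univ_succ]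
  have hrow : ∀ j : Fin (m+1), Gmat (m+2) 0 j.succ.succ = 0 := by
    intro j
    simp only [Gmat, Matrix.of_apply]
    split_ifs <;> first | rfl |
      ((simp only [Fin.coe_castSucc, Fin.val_succ, Fin.castSucc_zero, Fin.succ_zero_eq_one,
          Fin.val_zero, Fin.val_one, not_or, not_true, and_false, false_and, and_true, true_and,
          or_true, true_or, or_false, false_or] at *) <;> omega)
  rw [Finset.sum_eq_zero (fun j _ => by rw [hrow j]; ring)]
  rw [Fin.succ_zero_eq_one, h00, h01, hsub0, hsub1]
  have hC : C (1/Real.sqrt 35 : ℝ) * C (1/Real.sqrt 35 : ℝ) = C (1/35) := by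
    rw [← C_mul, div_mul_div_comm, one_mul, Real.mul_self_sqrt (by norm_num)]
  simp only [Fin.val_zero, Fin.val_one, pow_zero, pow_one]
  have hC2 : (C ((Real.sqrt 35)⁻¹) : ℝ[X]) ^ 2 = C (1/35) := by
    rw [sq, ← C_mul]
    congr 1
    rw [← one_div, div_mul_div_comm, one_mul, Real.mul_self_sqrt (by norm_num)]
  ring_nf
  rw [hC2]
  ring

lemma coeff_linear_mul (a : ℝ) (p : ℝ[X]) :
    ((X - C a) * p).coeff 0 = -a * p.coeff 0
      ∧ ((X - C a) * p).coeff 1 = p.coeff 0 - a * p.coeff 1 := by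
  constructor
  · simp [sub_mul, mul_coeff_zero]
  · simp [sub_mul, coeff_X_mul]

noncomputable def aa (k : ℕ) : ℝ := (-1)^k * (7/5) * (1/7)^k
noncomputable def cc (k : ℕ) : ℝ := (-1)^(k+1) * ((k:ℝ) * (7*(k:ℝ)+3) * 7 / 10) * (1/7)^k

lemma det_Hmat_one : (Hmat 1).det = X - C (1/5) := by
  rw [Matrix.det_fin_one]
  simp [Hmat]

lemma det_Hmat_two :
    (Hmat 2).det = (X - C (2/7)) * (X - C (1/5)) - C (1/35) := by
  rw [Matrix.det_fin_two]
  have h00 : Hmat 2 0 0 = X - C (2/7) := by simp [Hmat]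
  have h11 : Hmat 2 1 1 = X - C (1/5) := by simp [Hmat]
  have h01 : Hmat 2 0 1 = C (1/Real.sqrt 35) := by simp [Hmat]
  have h10 : Hmat 2 1 0 = C (1/Real.sqrt 35) := by simp [Hmat]
  rw [h00, h11, h01, h10, ← C_mul, div_mul_div_comm, one_mul,
    Real.mul_self_sqrt (by norm_num)]

lemma coeff_Hmat : ∀ k : ℕ,
    ((Hmat (k+1)).det.coeff 0 = aa (k+1) ∧ (Hmat (k+1)).det.coeff 1 = cc (k+1))
      ∧ ((Hmat (k+2)).det.coeff 0 = aa (k+2) ∧ (Hmat (k+2)).det.coeff 1 = cc (k+2)) := by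
  intro k
  induction k with
  | zero =>
    refine ⟨⟨?_, ?_⟩, ?_, ?_⟩
    · rw [det_Hmat_one]; simp [aa]; norm_num
    · rw [det_Hmat_one]; simp [cc]; norm_num
    · rw [det_Hmat_two]
      simp only [coeff_sub, (coeff_linear_mul (2/7) (X - C (1/5))).1, coeff_C_zero, aa]
      simp [coeff_sub]
      norm_num
    · rw [det_Hmat_two]
      simp only [coeff_sub, (coeff_linear_mul (2/7) (X - C (1/5))).2, cc]
      simp [coeff_sub, coeff_C]
      norm_num
  | succ k ih =>
    obtain ⟨⟨ha1, hc1⟩, ha2, hc2⟩ := ih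
    refine ⟨⟨ha2, hc2⟩, ?_, ?_⟩
    · rw [det_Hmat_rec (k+1) (by omega)]
      simp only [coeff_sub, coeff_C_mul, (coeff_linear_mul (2/7) (Hmat (k+2)).det).1,
        ha1, ha2]
      show -(2/7) * aa (k+2) - 1/49 * aa (k+1) = aa (k+3)
      simp only [aa, pow_succ]
      ring
    · rw [det_Hmat_rec (k+1) (by omega)]
      simp only [coeff_sub, coeff_C_mul, (coeff_linear_mul (2/7) (Hmat (k+2)).det).2,
        ha2, hc1, hc2]
      show aa (k+2) - 2/7 * cc (k+2) - 1/49 * cc (k+1) = cc (k+3)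
      simp only [aa, cc, pow_succ]
      push_cast
      ring

/-- Writing `det(xI − M) = x^{n+1} + a_1 x^n + ⋯ + a_n x`, one has
`(−1)^n a_n = (7n+3)/25 · (1/7)^{n−1}`, i.e. the coefficient of `x` in the
characteristic polynomial of `M` satisfies this identity. -/
theorem neg_one_pow_mul_charpoly_coeff_one_Mmat (n : ℕ) (hn : 2 ≤ n) :
    (-1 : ℝ)^n * (Mmat n).charpoly.coeff 1 = (7 * (n : ℝ) + 3) / 25 * (1/7)^(n-1) := by
  obtain ⟨m, rfl⟩ : ∃ m, n = m + 2 := ⟨n - 2, by omega⟩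
  obtain ⟨⟨ha1, hc1⟩, ha2, hc2⟩ := coeff_Hmat m
  have hchar : (Mmat (m+2)).charpoly = (Gmat (m+2)).det := by
    rw [Matrix.charpoly, charmatrix_Mmat]
  rw [hchar, det_Gmat m]
  have : ((X - C (1/5 : ℝ)) * (Hmat (m+2)).det - C (1/35) * (Hmat (m+1)).det).coeff 1
      = aa (m+2) - (1/5) * cc (m+2) - (1/35) * cc (m+1) := by
    rw [coeff_sub, coeff_C_mul, (coeff_linear_mul (1/5) (Hmat (m+2)).det).2, ha2, hc2, hc1]
  rw [this]
  have hsub : (m + 2 - 1 : ℕ) = m + 1 := by omega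
  rw [hsub]
  simp only [aa, cc, pow_succ]
  push_cast
  rcases Nat.even_or_odd m with he | ho
  · rw [he.neg_one_pow]; ring
  · rw [ho.neg_one_pow]; ring
end

section
/- Let n ≥ 2 and write det(xI − M) = x^{n+1} + a_1 x^n + … + a_{n−1} x² + a_n x. Then (−1)^{n−1} a_{n−1} = (49n³ + 63n² + 38n)/150 · (1/7)^{n−1}; equivalently, the coefficient of x² in the characteristic polynomial of M equals (−1)^{n−1} · (49n³ + 63n² + 38n)/(150 · 7^{n−1}). -/
open Polynomial Matrix

lemma det_expand3 {R : Type*} [CommRing R] {n : ℕ} (A : Matrix (Fin (n+3)) (Fin (n+3)) R)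
    (hrow : ∀ j : Fin (n+1), A 0 j.succ.succ = 0)
    (hcol : ∀ i : Fin (n+1), A i.succ.succ 0 = 0) :
    A.det = A 0 0 * (A.submatrix Fin.succ Fin.succ).det
      - A 0 1 * A 1 0 * (A.submatrix (Fin.succ ∘ Fin.succ) (Fin.succ ∘ Fin.succ)).det := by
  have hN : (A.submatrix Fin.succ (Fin.succAbove 1)).det
      = A 1 0 * (A.submatrix (Fin.succ ∘ Fin.succ) (Fin.succ ∘ Fin.succ)).det := by
    rw [det_succ_column_zero, Fin.sum_univ_succ]
    have h1 : ∀ i : Fin (n+1), (A.submatrix Fin.succ (Fin.succAbove 1)) i.succ 0 = 0 := by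
      intro i
      have : (Fin.succAbove 1 (0 : Fin (n+2))) = 0 := by
        rw [show (1 : Fin (n+3)) = (0 : Fin (n+2)).succ from rfl, Fin.succ_succAbove_zero]
      simp [Matrix.submatrix_apply, this, hcol i]
    have h2 : (A.submatrix Fin.succ (Fin.succAbove 1)).submatrix (Fin.succAbove 0) Fin.succ
        = A.submatrix (Fin.succ ∘ Fin.succ) (Fin.succ ∘ Fin.succ) := by
      ext i j
      have : (Fin.succAbove 1 (j.succ : Fin (n+2))) = j.succ.succ := by
        rw [show (1 : Fin (n+3)) = (0 : Fin (n+2)).succ from rfl, Fin.succ_succAbove_succ,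
          Fin.zero_succAbove]
      simp [Matrix.submatrix_apply, Fin.succAbove_zero, this]
    have h0 : (Fin.succAbove 1 (0 : Fin (n+2))) = 0 := by
      rw [show (1 : Fin (n+3)) = (0 : Fin (n+2)).succ from rfl, Fin.succ_succAbove_zero]
    have hc : (Fin.succAbove (1 : Fin (n+3))) ∘ Fin.succ = Fin.succ ∘ Fin.succ := by
      funext j
      simp only [Function.comp_apply]
      rw [show (1 : Fin (n+3)) = (0 : Fin (n+2)).succ from rfl, Fin.succ_succAbove_succ,
        Fin.zero_succAbove]
    simp [h1, h2, Matrix.submatrix_apply, h0, Fin.succAbove_zero, hcol, hc]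
  rw [det_succ_row_zero, Fin.sum_univ_succ, Fin.sum_univ_succ]
  have hz : ∀ j : Fin (n+1),
      (-1 : R) ^ ((j.succ.succ : Fin (n+3)) : ℕ) * A 0 j.succ.succ
        * ((A.submatrix Fin.succ (Fin.succAbove j.succ.succ)).det) = 0 := by
    intro j; rw [hrow j]; ring
  simp only [hz, Finset.sum_const_zero, add_zero]
  rw [show ((0 : Fin (n+2)).succ) = (1 : Fin (n+3)) from rfl]
  simp [Fin.succAbove_zero, hN]
  ring

noncomputable def Bmat (m : ℕ) : Matrix (Fin (m+1)) (Fin (m+1)) (Polynomial ℝ) :=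
  Matrix.of fun i j =>
    if i = j then (if i.val = m then X - C (1/5) else X - C (2/7))
    else if i.val + 1 = j.val ∨ j.val + 1 = i.val then
      (if max i.val j.val = m then C (1/Real.sqrt 35) else C (1/7))
    else 0

noncomputable def Gpol : ℕ → Polynomial ℝ
  | 0 => C (7/5)
  | 1 => X - C (1/5)
  | (k+2) => (X - C (2/7)) * Gpol (k+1) - C (1/49) * Gpol k

lemma subB1 (m : ℕ) : (Bmat (m+2)).submatrix Fin.succ Fin.succ = Bmat (m+1) := by
  ext i j
  simp only [Matrix.submatrix_apply, Bmat, Matrix.of_apply, Fin.succ_inj, Fin.val_succ]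
  split_ifs <;> first | rfl | omega

lemma subB2 (m : ℕ) :
    (Bmat (m+2)).submatrix (Fin.succ ∘ Fin.succ) (Fin.succ ∘ Fin.succ) = Bmat m := by
  ext i j
  simp only [Matrix.submatrix_apply, Function.comp_apply, Bmat, Matrix.of_apply, Fin.succ_inj,
    Fin.val_succ]
  split_ifs <;> first | rfl | omega

lemma subA1 (m : ℕ) :
    (Mmat (m+2)).charmatrix.submatrix Fin.succ Fin.succ = Bmat (m+1) := by
  ext i j
  simp only [Matrix.submatrix_apply, Matrix.charmatrix_apply, Matrix.diagonal_apply, Mmat, Bmat,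
    Matrix.of_apply, Matrix.map_apply, Fin.succ_inj, Fin.val_succ]
  split_ifs <;> first | (simp; done) | omega | simp_all <;> omega

lemma subA2 (m : ℕ) :
    (Mmat (m+2)).charmatrix.submatrix (Fin.succ ∘ Fin.succ) (Fin.succ ∘ Fin.succ) = Bmat m := by
  ext i j
  simp only [Matrix.submatrix_apply, Function.comp_apply, Matrix.charmatrix_apply,
    Matrix.diagonal_apply, Mmat, Bmat, Matrix.of_apply, Matrix.map_apply, Fin.succ_inj,
    Fin.val_succ]
  split_ifs <;> first | (simp; done) | omega | simp_all <;> omega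

lemma rowA (m : ℕ) (j : Fin (m+1)) : (Mmat (m+2)).charmatrix 0 j.succ.succ = 0 := by
  have h1 : (0 : Fin (m+3)) ≠ j.succ.succ := (Fin.succ_ne_zero _).symm
  have h2 : ¬(((0 : Fin (m+3)) : ℕ) + 1 = ((j.succ.succ : Fin (m+3)) : ℕ)
      ∨ ((j.succ.succ : Fin (m+3)) : ℕ) + 1 = ((0 : Fin (m+3)) : ℕ)) := by
    simp only [Fin.val_succ, Fin.val_zero]; omega
  simp [Matrix.charmatrix_apply, Mmat, Matrix.diagonal_apply, h1, h2]

lemma colA (m : ℕ) (i : Fin (m+1)) : (Mmat (m+2)).charmatrix i.succ.succ 0 = 0 := by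
  have h1 : (i.succ.succ : Fin (m+3)) ≠ 0 := Fin.succ_ne_zero _
  have h2 : ¬(((i.succ.succ : Fin (m+3)) : ℕ) + 1 = ((0 : Fin (m+3)) : ℕ)
      ∨ ((0 : Fin (m+3)) : ℕ) + 1 = ((i.succ.succ : Fin (m+3)) : ℕ)) := by
    simp only [Fin.val_succ, Fin.val_zero]; omega
  simp [Matrix.charmatrix_apply, Mmat, Matrix.diagonal_apply, h1, h2]

lemma rowB (m : ℕ) (j : Fin (m+1)) : Bmat (m+2) 0 j.succ.succ = 0 := by
  have h1 : (0 : Fin (m+3)) ≠ j.succ.succ := (Fin.succ_ne_zero _).symm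
  have h2 : ¬(((0 : Fin (m+3)) : ℕ) + 1 = ((j.succ.succ : Fin (m+3)) : ℕ)
      ∨ ((j.succ.succ : Fin (m+3)) : ℕ) + 1 = ((0 : Fin (m+3)) : ℕ)) := by
    simp only [Fin.val_succ, Fin.val_zero]; omega
  simp [Bmat, h1, h2]

lemma colB (m : ℕ) (i : Fin (m+1)) : Bmat (m+2) i.succ.succ 0 = 0 := by
  have h1 : (i.succ.succ : Fin (m+3)) ≠ 0 := Fin.succ_ne_zero _
  have h2 : ¬(((i.succ.succ : Fin (m+3)) : ℕ) + 1 = ((0 : Fin (m+3)) : ℕ)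
      ∨ ((0 : Fin (m+3)) : ℕ) + 1 = ((i.succ.succ : Fin (m+3)) : ℕ)) := by
    simp only [Fin.val_succ, Fin.val_zero]; omega
  simp [Bmat, h1, h2]

lemma eA00 (m : ℕ) : (Mmat (m+2)).charmatrix 0 0 = X - C (1/5) := by
  simp [Matrix.charmatrix_apply, Mmat, Matrix.diagonal_apply]

lemma eA01 (m : ℕ) : (Mmat (m+2)).charmatrix 0 1 = C (1/Real.sqrt 35) := by
  have h1 : (0 : Fin (m+3)) ≠ 1 := by simp [Fin.ext_iff]
  have h2 : ((0 : Fin (m+3)) : ℕ) + 1 = ((1 : Fin (m+3)) : ℕ)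
      ∨ ((1 : Fin (m+3)) : ℕ) + 1 = ((0 : Fin (m+3)) : ℕ) := by
    simp [Fin.val_one]
  simp [Matrix.charmatrix_apply, Mmat, Matrix.diagonal_apply, h1, h2, Fin.val_one]

lemma eA10 (m : ℕ) : (Mmat (m+2)).charmatrix 1 0 = C (1/Real.sqrt 35) := by
  have h1 : (1 : Fin (m+3)) ≠ 0 := by simp [Fin.ext_iff]
  have h2 : ((1 : Fin (m+3)) : ℕ) + 1 = ((0 : Fin (m+3)) : ℕ)
      ∨ ((0 : Fin (m+3)) : ℕ) + 1 = ((1 : Fin (m+3)) : ℕ) := by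
    simp [Fin.val_one]
  simp [Matrix.charmatrix_apply, Mmat, Matrix.diagonal_apply, h1, h2, Fin.val_one]

lemma eB00 (m : ℕ) : Bmat (m+2) 0 0 = X - C (2/7) := by
  have : ((0 : Fin (m+3)) : ℕ) ≠ m + 2 := by simp
  simp [Bmat, this]

lemma eB01 (m : ℕ) : Bmat (m+2) 0 1 = C (1/7) := by
  have h1 : (0 : Fin (m+3)) ≠ 1 := by simp [Fin.ext_iff]
  have h2 : ((0 : Fin (m+3)) : ℕ) + 1 = ((1 : Fin (m+3)) : ℕ)
      ∨ ((1 : Fin (m+3)) : ℕ) + 1 = ((0 : Fin (m+3)) : ℕ) := by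
    simp [Fin.val_one]
  have h3 : ¬ (max ((0 : Fin (m+3)) : ℕ) ((1 : Fin (m+3)) : ℕ) = m + 2) := by
    simp [Fin.val_one]
  simp [Bmat, h1, h2, h3]

lemma eB10 (m : ℕ) : Bmat (m+2) 1 0 = C (1/7) := by
  have h1 : (1 : Fin (m+3)) ≠ 0 := by simp [Fin.ext_iff]
  have h2 : ((1 : Fin (m+3)) : ℕ) + 1 = ((0 : Fin (m+3)) : ℕ)
      ∨ ((0 : Fin (m+3)) : ℕ) + 1 = ((1 : Fin (m+3)) : ℕ) := by
    simp [Fin.val_one]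
  have h3 : ¬ (max ((1 : Fin (m+3)) : ℕ) ((0 : Fin (m+3)) : ℕ) = m + 2) := by
    simp [Fin.val_one]
  simp [Bmat, h1, h2, h3]

lemma sq35 : (C (1/Real.sqrt 35) : Polynomial ℝ) * C (1/Real.sqrt 35) = C (1/35) := by
  rw [← C_mul, div_mul_div_comm, one_mul,
    Real.mul_self_sqrt (by norm_num : (0:ℝ) ≤ 35)]

lemma detB0 : (Bmat 0).det = Gpol 1 := by
  rw [Matrix.det_fin_one]
  simp [Bmat, Gpol]

lemma detB1 : (Bmat 1).det = Gpol 2 := by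
  rw [Matrix.det_fin_two]
  have e00 : Bmat 1 0 0 = X - C (2/7) := by simp [Bmat]
  have e11 : Bmat 1 1 1 = X - C (1/5) := by simp [Bmat]
  have e01 : Bmat 1 0 1 = C (1/Real.sqrt 35) := by simp [Bmat]
  have e10 : Bmat 1 1 0 = C (1/Real.sqrt 35) := by simp [Bmat]
  rw [e00, e11, e01, e10, sq35]
  show _ = (X - C (2/7)) * Gpol 1 - C (1/49) * Gpol 0
  have : (C (1/49) : Polynomial ℝ) * C (7/5) = C (1/35) := by
    rw [← C_mul]; norm_num
  show _ = (X - C (2/7)) * (X - C (1/5)) - C (1/49) * C (7/5)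
  rw [this]

lemma detB_rec (m : ℕ) : (Bmat (m+2)).det
    = (X - C (2/7)) * (Bmat (m+1)).det - C (1/49) * (Bmat m).det := by
  rw [det_expand3 _ (rowB m) (colB m), subB1, subB2, eB00, eB01, eB10]
  have : (C (1/7) : Polynomial ℝ) * C (1/7) = C (1/49) := by
    rw [← C_mul]; norm_num
  rw [mul_assoc, ← mul_assoc (C (1/7)), this]

lemma detB (m : ℕ) : (Bmat m).det = Gpol (m+1) := by
  have key : ∀ k, (Bmat k).det = Gpol (k+1) ∧ (Bmat (k+1)).det = Gpol (k+2) := by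
    intro k
    induction k with
    | zero => exact ⟨detB0, detB1⟩
    | succ k ih =>
        refine ⟨ih.2, ?_⟩
        rw [detB_rec k, ih.1, ih.2]
        rfl
  exact (key m).1

lemma charpolyMmat (m : ℕ) : (Mmat (m+2)).charpoly
    = (X - C (1/5)) * Gpol (m+2) - C (1/35) * Gpol (m+1) := by
  show (Mmat (m+2)).charmatrix.det = _
  rw [det_expand3 _ (rowA m) (colA m), subA1, subA2, eA00, eA01, eA10, detB, detB]
  rw [mul_assoc, ← mul_assoc (C (1/Real.sqrt 35)), sq35]


lemma coeff_step (a b : ℝ) (p q : Polynomial ℝ) (n : ℕ) :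
    ((X - C a) * p - C b * q).coeff (n+1)
      = p.coeff n - a * p.coeff (n+1) - b * q.coeff (n+1) := by
  rw [coeff_sub, sub_mul, coeff_sub, coeff_X_mul, coeff_C_mul, coeff_C_mul]

lemma coeff_step0 (a b : ℝ) (p q : Polynomial ℝ) :
    ((X - C a) * p - C b * q).coeff 0 = - (a * p.coeff 0) - b * q.coeff 0 := by
  rw [coeff_sub, sub_mul, coeff_sub, mul_coeff_zero, coeff_X_zero, coeff_C_mul, coeff_C_mul]
  ring

lemma Gcoeff (k : ℕ) :
    (Gpol k).coeff 0 = 7/5 * (-1/7 : ℝ)^k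
    ∧ (Gpol k).coeff 1 = -(7*(k:ℝ)) * (3+7*(k:ℝ)) / 10 * (-1/7 : ℝ)^k
    ∧ (Gpol k).coeff 2
        = 49*(k:ℝ)*((k:ℝ)-1)*((k:ℝ)+1)*(7*(k:ℝ)+6)/120 * (-1/7 : ℝ)^k := by
  induction k using Nat.twoStepInduction with
  | zero => norm_num [Gpol]
  | one => norm_num [Gpol, coeff_X, coeff_C]
  | more k ih1 ih2 =>
      obtain ⟨a0, a1, a2⟩ := ih2
      obtain ⟨b0, b1, b2⟩ := ih1
      have e0 : (Gpol (k+2)).coeff 0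
          = -(2/7 * (Gpol (k+1)).coeff 0) - 1/49 * (Gpol k).coeff 0 := by
        show ((X - C (2/7)) * Gpol (k+1) - C (1/49) * Gpol k).coeff 0 = _
        rw [coeff_step0]
      have e1 : (Gpol (k+2)).coeff 1
          = (Gpol (k+1)).coeff 0 - 2/7 * (Gpol (k+1)).coeff 1 - 1/49 * (Gpol k).coeff 1 := by
        show ((X - C (2/7)) * Gpol (k+1) - C (1/49) * Gpol k).coeff (0+1) = _
        rw [coeff_step]
      have e2 : (Gpol (k+2)).coeff 2
          = (Gpol (k+1)).coeff 1 - 2/7 * (Gpol (k+1)).coeff 2 - 1/49 * (Gpol k).coeff 2 := by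
        show ((X - C (2/7)) * Gpol (k+1) - C (1/49) * Gpol k).coeff (1+1) = _
        rw [coeff_step]
      rw [e0, e1, e2, a0, a1, a2, b0, b1, b2]
      refine ⟨?_, ?_, ?_⟩ <;>
      · push_cast
        rw [show k+2 = (k+1)+1 from rfl, pow_succ, pow_succ]
        ring

/-- Writing `det(xI − M) = x^{n+1} + a_1 x^n + ⋯ + a_{n−1} x² + a_n x`, one has
`(−1)^{n−1} a_{n−1} = (49n³ + 63n² + 38n)/150 · (1/7)^{n−1}`, i.e. the coefficient
of `x²` in the characteristic polynomial of `M` satisfies this identity. -/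
theorem neg_one_pow_mul_charpoly_coeff_two_Mmat (n : ℕ) (hn : 2 ≤ n) :
    (-1 : ℝ)^(n-1) * (Mmat n).charpoly.coeff 2
      = (49 * (n : ℝ)^3 + 63 * (n : ℝ)^2 + 38 * (n : ℝ)) / 150 * (1/7)^(n-1) := by
  obtain ⟨m, rfl⟩ : ∃ m, n = m + 2 := ⟨n - 2, by omega⟩
  have hsub : m + 2 - 1 = m + 1 := by omega
  rw [hsub]
  have hc2 : (Mmat (m+2)).charpoly.coeff 2
      = (Gpol (m+2)).coeff 1 - 1/5 * (Gpol (m+2)).coeff 2 - 1/35 * (Gpol (m+1)).coeff 2 := by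
    rw [charpolyMmat m]
    show ((X - C (1/5)) * Gpol (m+2) - C (1/35) * Gpol (m+1)).coeff (1+1) = _
    rw [coeff_step]
  rw [hc2, (Gcoeff (m+2)).2.1, (Gcoeff (m+2)).2.2, (Gcoeff (m+1)).2.2]
  simp only [show ((-1:ℝ)/7) = (-1)*(1/7) from by norm_num, mul_pow,
    show m+2 = (m+1)+1 from rfl, pow_succ]
  push_cast
  rcases neg_one_pow_eq_or ℝ m with h | h <;> simp only [h] <;> ring
end

section
/- Let n ≥ 2 and let 0 = α_1 ≤ α_2 ≤ … ≤ α_{n+1} be the eigenvalues (with multiplicity) of M. Then the product of the nonzero eigenvalues satisfies ∏_{i=2}^{n+1} α_i = (7n+3)/25 · (1/7)^{n−1}. -/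
open Polynomial

open Matrix

/-! ### Auxiliary tridiagonal determinant family -/

noncomputable def Tm (k : ℕ) : Matrix (Fin k) (Fin k) (Polynomial ℝ) :=
  Matrix.of fun i j =>
    if i.val = j.val then (if i.val + 1 = k then X - C (1/5) else X - C (2/7))
    else if i.val + 1 = j.val ∨ j.val + 1 = i.val then
      (if max i.val j.val + 1 = k then C (1/Real.sqrt 35) else C (1/7))
    else 0

lemma Tm_shift (k : ℕ) : (Tm (k+1)).submatrix Fin.succ Fin.succ = Tm k := by
  ext i j
  simp only [submatrix_apply, Tm, of_apply, Fin.val_succ]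
  split_ifs <;> first | rfl | (exfalso; omega) | (exfalso; simp_all)

lemma det_Tm_one : (Tm 1).det = X - C (1/5 : ℝ) := by
  rw [det_fin_one]
  simp [Tm]

lemma det_Tm_two : (Tm 2).det = X^2 - C (17/35 : ℝ) * X + C (1/35 : ℝ) := by
  have h35 : (1/Real.sqrt 35) * (1/Real.sqrt 35) = (1/35 : ℝ) := by
    rw [div_mul_div_comm, one_mul, Real.mul_self_sqrt (by norm_num)]
  rw [det_fin_two]
  show ((X - C (2/7)) * (X - C (1/5)) - C (1/Real.sqrt 35) * C (1/Real.sqrt 35) : ℝ[X]) = _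
  rw [← C_mul, h35]
  rw [show ((X - C (2/7)) * (X - C (1/5)) : ℝ[X]) = X^2 - (C (2/7) + C (1/5)) * X + C (2/7) * C (1/5) by ring]
  rw [← C_add, ← C_mul,
    show (2/7+1/5 : ℝ) = 17/35 by norm_num, show (2/7*(1/5) : ℝ) = 2/35 by norm_num,
    show (X^2 - C (17/35:ℝ)*X + C (2/35) - C (1/35):ℝ[X]) = X^2 - C (17/35)*X + (C (2/35) - C (1/35)) from by ring,
    ← C_sub]
  norm_num

lemma det_Tm_step (k : ℕ) :
    (Tm (k+3)).det = (X - C (2/7)) * (Tm (k+2)).det - C (1/49) * (Tm (k+1)).det := by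
  rw [det_succ_row_zero, Fin.sum_univ_succ, Fin.sum_univ_succ]
  have h00 : Tm (k+3) 0 0 = X - C (2/7) := by
    simp only [Tm, of_apply, Fin.val_zero]
    split_ifs <;> first | rfl | (exfalso; omega) | (exfalso; simp_all)
  have h01 : Tm (k+3) 0 (Fin.succ 0) = C (1/7) := by
    simp only [Tm, of_apply, Fin.val_zero, Fin.val_succ]
    split_ifs <;> first | rfl | (exfalso; omega) | (exfalso; simp_all)
  have hrest : ∀ j : Fin (k+1), Tm (k+3) 0 (Fin.succ (Fin.succ j)) = 0 := by
    intro j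
    simp only [Tm, of_apply, Fin.val_zero, Fin.val_succ]
    split_ifs <;> first | rfl | (exfalso; omega) | (exfalso; simp_all)
  have hm0 : (Tm (k+3)).submatrix Fin.succ (Fin.succAbove 0) = Tm (k+2) := by
    rw [Fin.succAbove_zero, Tm_shift]
  set B := (Tm (k+3)).submatrix Fin.succ (Fin.succAbove (Fin.succ 0)) with hB
  have hB00 : B 0 0 = C (1/7) := by
    have hc : (Fin.succ (0 : Fin (k+2))).succAbove (0 : Fin (k+2)) = 0 := by
      rw [Fin.succAbove_of_castSucc_lt]
      · rfl
      · simp [Fin.lt_def]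
    simp only [hB, submatrix_apply, hc]
    simp only [Tm, of_apply, Fin.val_succ, Fin.val_zero]
    split_ifs <;> first | rfl | (exfalso; omega) | (exfalso; simp_all)
  have hBi0 : ∀ i : Fin (k+1), B (Fin.succ i) 0 = 0 := by
    intro i
    have hc : (Fin.succ (0 : Fin (k+2))).succAbove (0 : Fin (k+2)) = 0 := by
      rw [Fin.succAbove_of_castSucc_lt]
      · rfl
      · simp [Fin.lt_def]
    simp only [hB, submatrix_apply, hc]
    simp only [Tm, of_apply, Fin.val_succ, Fin.val_zero]
    split_ifs <;> first | rfl | (exfalso; omega) | (exfalso; simp_all)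
  have hBsub : B.submatrix (Fin.succAbove 0) Fin.succ = Tm (k+1) := by
    ext i j
    have hc : (Fin.succ (0 : Fin (k+2))).succAbove (Fin.succ j) = Fin.succ (Fin.succ j) := by
      rw [Fin.succAbove_of_le_castSucc]
      simp [Fin.le_def]
    simp only [hB, submatrix_apply, Fin.succAbove_zero, hc]
    simp only [Tm, of_apply, Fin.val_succ]
    split_ifs <;> first | rfl | (exfalso; omega) | (exfalso; simp_all)
  have hdetB : B.det = C (1/7) * (Tm (k+1)).det := by
    rw [det_succ_column_zero, Fin.sum_univ_succ]
    rw [Finset.sum_eq_zero (fun i _ => by rw [hBi0 i, mul_zero, zero_mul])]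
    rw [hB00, hBsub]
    simp
  rw [Finset.sum_eq_zero (fun j (_ : j ∈ Finset.univ) => by
    rw [hrest j, mul_zero, zero_mul])]
  rw [h00, h01, hm0, hdetB]
  simp only [Fin.val_zero, pow_zero, one_mul, Fin.val_succ, pow_succ, pow_zero]
  have h49 : (C (1/7:ℝ)) * C (1/7) = C (1/49) := by rw [← C_mul]; norm_num
  linear_combination -(Tm (k+1)).det * h49

/-! ### Coefficients of the auxiliary determinants -/

lemma coeff_one_X_sub_C_mul (a : ℝ) (p : ℝ[X]) :
    ((X - C a) * p).coeff 1 = p.coeff 0 - a * p.coeff 1 := by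
  rw [sub_mul, coeff_sub, coeff_C_mul]
  rw [show (1:ℕ) = 0 + 1 from rfl, coeff_X_mul]

lemma coeff_zero_X_sub_C_mul (a : ℝ) (p : ℝ[X]) :
    ((X - C a) * p).coeff 0 = -a * p.coeff 0 := by
  rw [mul_coeff_zero]
  simp

lemma Tm_coeff (k : ℕ) :
    ((Tm (k+1)).det.coeff 0 = 7/5 * (-1/7:ℝ)^(k+1)) ∧
    ((Tm (k+1)).det.coeff 1 = -(7/10) * (-1/7:ℝ)^(k+1) * ((k:ℝ)+1) * (7*(k:ℝ)+10)) := by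
  induction k using Nat.twoStepInduction with
  | zero =>
    rw [det_Tm_one]
    constructor <;> simp <;> norm_num
  | one =>
    rw [det_Tm_two]
    constructor <;> · simp [coeff_one]; norm_num
  | more k ih1 ih2 =>
    obtain ⟨h0, h1⟩ := ih1
    obtain ⟨h0', h1'⟩ := ih2
    rw [show k+2+1 = k+3 from rfl, det_Tm_step k]
    constructor
    · rw [coeff_sub, coeff_zero_X_sub_C_mul, coeff_C_mul, h0, h0']
      simp only [pow_succ]
      push_cast
      ring
    · rw [coeff_sub, coeff_one_X_sub_C_mul, coeff_C_mul, h0', h1, h1']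
      simp only [pow_succ]
      push_cast
      ring

/-! ### The characteristic polynomial of `Mmat` -/

noncomputable def Cm (n : ℕ) : Matrix (Fin (n+1)) (Fin (n+1)) (Polynomial ℝ) :=
  Matrix.of fun i j =>
    if i.val = j.val then (if i.val = 0 ∨ i.val = n then X - C (1/5) else X - C (2/7))
    else if i.val + 1 = j.val ∨ j.val + 1 = i.val then
      (if min i.val j.val = 0 ∨ max i.val j.val = n then C (1/Real.sqrt 35) else C (1/7))
    else 0

lemma charmatrix_Mmat_s10 (n : ℕ) : Matrix.charmatrix (Mmat n) = Cm n := by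
  ext i j
  by_cases h : i = j
  · subst h
    rw [Matrix.charmatrix_apply_eq]
    simp only [Mmat, Cm, of_apply, if_pos rfl]
    split_ifs <;> rfl
  · rw [Matrix.charmatrix_apply_ne _ _ _ h]
    have hv : ¬ (i.val = j.val) := fun hv => h (Fin.ext hv)
    simp only [Mmat, Cm, of_apply, if_neg h, if_neg hv]
    split_ifs <;> simp

lemma charpoly_Mmat (m : ℕ) :
    (Mmat (m+2)).charpoly
      = (X - C (1/5)) * (Tm (m+2)).det - C (1/35) * (Tm (m+1)).det := by
  rw [Matrix.charpoly, charmatrix_Mmat_s10]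
  rw [det_succ_row_zero, Fin.sum_univ_succ, Fin.sum_univ_succ]
  have h00 : Cm (m+2) 0 0 = X - C (1/5) := by
    simp only [Cm, of_apply, Fin.val_zero]
    split_ifs <;> first | rfl | (exfalso; omega) | simp_all
  have h01 : Cm (m+2) 0 (Fin.succ 0) = C (1/Real.sqrt 35) := by
    simp only [Cm, of_apply, Fin.val_zero, Fin.val_succ]
    split_ifs <;> first | rfl | (exfalso; omega) | simp_all
  have hrest : ∀ j : Fin (m+1), Cm (m+2) 0 (Fin.succ (Fin.succ j)) = 0 := by
    intro j
    simp only [Cm, of_apply, Fin.val_zero, Fin.val_succ]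
    split_ifs <;> first | rfl | (exfalso; omega) | simp_all
  have hm0 : (Cm (m+2)).submatrix Fin.succ (Fin.succAbove 0) = Tm (m+2) := by
    rw [Fin.succAbove_zero]
    ext i j
    simp only [submatrix_apply, Cm, Tm, of_apply, Fin.val_succ]
    split_ifs <;> first | rfl | (exfalso; omega) | simp_all
  set B := (Cm (m+2)).submatrix Fin.succ (Fin.succAbove (Fin.succ 0)) with hB
  have hc0 : (Fin.succ (0 : Fin (m+2))).succAbove (0 : Fin (m+2)) = 0 := by
    rw [Fin.succAbove_of_castSucc_lt]
    · rfl
    · simp [Fin.lt_def]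
  have hB00 : B 0 0 = C (1/Real.sqrt 35) := by
    simp only [hB, submatrix_apply, hc0]
    simp only [Cm, of_apply, Fin.val_succ, Fin.val_zero]
    split_ifs <;> first | rfl | (exfalso; omega) | simp_all
  have hBi0 : ∀ i : Fin (m+1), B (Fin.succ i) 0 = 0 := by
    intro i
    simp only [hB, submatrix_apply, hc0]
    simp only [Cm, of_apply, Fin.val_succ, Fin.val_zero]
    split_ifs <;> first | rfl | (exfalso; omega) | simp_all
  have hBsub : B.submatrix (Fin.succAbove 0) Fin.succ = Tm (m+1) := by
    ext i j
    have hc : (Fin.succ (0 : Fin (m+2))).succAbove (Fin.succ j) = Fin.succ (Fin.succ j) := by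
      rw [Fin.succAbove_of_le_castSucc]
      simp [Fin.le_def]
    simp only [hB, submatrix_apply, Fin.succAbove_zero, hc]
    simp only [Cm, Tm, of_apply, Fin.val_succ]
    split_ifs <;> first | rfl | (exfalso; omega) | simp_all
  have hdetB : B.det = C (1/Real.sqrt 35) * (Tm (m+1)).det := by
    rw [det_succ_column_zero, Fin.sum_univ_succ]
    rw [Finset.sum_eq_zero (fun i _ => by rw [hBi0 i, mul_zero, zero_mul])]
    rw [hB00, hBsub]
    simp
  rw [Finset.sum_eq_zero (fun j (_ : j ∈ Finset.univ) => by
    rw [hrest j, mul_zero, zero_mul])]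
  rw [h00, h01, hm0, hdetB]
  simp only [Fin.val_zero, pow_zero, one_mul, Fin.val_succ, pow_succ]
  have h35 : (C (1/Real.sqrt 35) : ℝ[X]) * C (1/Real.sqrt 35) = C (1/35) := by
    rw [← C_mul, div_mul_div_comm, one_mul, Real.mul_self_sqrt (by norm_num)]
  linear_combination -(Tm (m+1)).det * h35

lemma charpoly_coeff_zero (n : ℕ) (hn : 2 ≤ n) : (Mmat n).charpoly.coeff 0 = 0 := by
  obtain ⟨m, rfl⟩ : ∃ m, n = m + 2 := ⟨n - 2, by omega⟩
  rw [charpoly_Mmat m, coeff_sub, coeff_zero_X_sub_C_mul, coeff_C_mul,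
    (Tm_coeff (m+1)).1, (Tm_coeff m).1]
  simp only [pow_succ]
  ring

lemma charpoly_coeff_one (n : ℕ) (hn : 2 ≤ n) :
    (Mmat n).charpoly.coeff 1 = (-1:ℝ)^n * ((7*(n:ℝ)+3)/25 * (1/7)^(n-1)) := by
  obtain ⟨m, rfl⟩ : ∃ m, n = m + 2 := ⟨n - 2, by omega⟩
  rw [charpoly_Mmat m, coeff_sub, coeff_one_X_sub_C_mul, coeff_C_mul,
    (Tm_coeff (m+1)).1, (Tm_coeff (m+1)).2, (Tm_coeff m).2,
    show m+2-1 = m+1 from rfl]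
  simp only [pow_succ]
  rw [show ((-1/7:ℝ))^m = (-1)^m * (1/7)^m from by rw [← mul_pow]; norm_num]
  push_cast
  ring

/-! ### Positive semidefiniteness -/

noncomputable def dv (n j : ℕ) : ℝ :=
  if j = 0 ∨ j = n then 1/Real.sqrt 5 else 1/Real.sqrt 7

noncomputable def Amat (n : ℕ) : Matrix (Fin n) (Fin (n+1)) ℝ :=
  Matrix.of fun k i =>
    if i.val = k.val then dv n k.val
    else if i.val = k.val + 1 then -(dv n (k.val+1)) else 0

lemma dv_five {n j : ℕ} (h : j = 0 ∨ j = n) : dv n j = 1/Real.sqrt 5 := if_pos h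
lemma dv_seven {n j : ℕ} (h : ¬(j = 0 ∨ j = n)) : dv n j = 1/Real.sqrt 7 := if_neg h

lemma dv55 : (1/Real.sqrt 5 : ℝ) * (1/Real.sqrt 5) = 1/5 := by
  rw [div_mul_div_comm, one_mul, Real.mul_self_sqrt (by norm_num)]

lemma dv77 : (1/Real.sqrt 7 : ℝ) * (1/Real.sqrt 7) = 1/7 := by
  rw [div_mul_div_comm, one_mul, Real.mul_self_sqrt (by norm_num)]

lemma dv57 : (1/Real.sqrt 5 : ℝ) * (1/Real.sqrt 7) = 1/Real.sqrt 35 := by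
  rw [div_mul_div_comm, one_mul, show (35:ℝ) = 5 * 7 by norm_num,
    Real.sqrt_mul (by norm_num : (0:ℝ) ≤ 5)]

lemma Mmat_symm (n : ℕ) (i j : Fin (n+1)) : Mmat n j i = Mmat n i j := by
  by_cases h : i = j
  · subst h; rfl
  · simp only [Mmat, of_apply, if_neg h, if_neg (Ne.symm h)]
    exact if_congr (by omega) (if_congr (by omega) rfl rfl) rfl

lemma AtA_offdiag (n : ℕ) (hn : 2 ≤ n) (i j : Fin (n+1)) (h : i.val + 1 = j.val) :
    ∑ k : Fin n, Amat n k i * Amat n k j = Mmat n i j := by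
  have hij : ¬ (i = j) := fun e => by rw [e] at h; omega
  have hiv : i.val < n := by have := j.isLt; omega
  rw [Finset.sum_eq_single_of_mem (⟨i.val, hiv⟩ : Fin n) (Finset.mem_univ _) ?side]
  case side =>
    intro b _ hb
    have hb' : ¬ (b.val = i.val) := fun e => hb (Fin.ext e)
    simp only [Amat, of_apply]
    split_ifs <;> first | ring1 | (exfalso; omega)
  have h1 : Amat n (⟨i.val, hiv⟩ : Fin n) i = dv n i.val := by
    show (if i.val = i.val then dv n i.val else
      if i.val = i.val + 1 then -(dv n (i.val+1)) else 0) = dv n i.val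
    rw [if_pos rfl]
  have h2 : Amat n (⟨i.val, hiv⟩ : Fin n) j = -(dv n j.val) := by
    show (if j.val = i.val then dv n i.val else
      if j.val = i.val + 1 then -(dv n (i.val+1)) else 0) = -(dv n j.val)
    rw [if_neg (by omega), if_pos (by omega), show i.val + 1 = j.val from h]
  rw [h1, h2]
  simp only [Mmat, of_apply, if_neg hij, if_pos (Or.inl h)]
  have hmin : min i.val j.val = i.val := by omega
  have hmax : max i.val j.val = j.val := by omega
  rw [hmin, hmax]
  by_cases hi0 : i.val = 0
  · rw [if_pos (Or.inl hi0), dv_five (Or.inl hi0), dv_seven (by omega), mul_neg, dv57]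
  · by_cases hjn : j.val = n
    · rw [if_pos (Or.inr hjn), dv_seven (by omega), dv_five (Or.inr hjn),
        mul_neg, mul_comm, dv57]
    · rw [if_neg (by omega), dv_seven (by omega), dv_seven (by omega), mul_neg, dv77]

lemma AtA (n : ℕ) (hn : 2 ≤ n) : (Amat n)ᵀ * Amat n = Mmat n := by
  ext i j
  rw [Matrix.mul_apply]
  simp only [transpose_apply]
  rcases lt_trichotomy i.val j.val with hlt | heq | hgt
  · by_cases hadj : i.val + 1 = j.val
    · exact AtA_offdiag n hn i j hadj
    · have hij : ¬ (i = j) := fun e => by rw [e] at hlt; omega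
      rw [Finset.sum_eq_zero, Mmat, of_apply, if_neg hij, if_neg (by omega)]
      intro b _
      simp only [Amat, of_apply]
      split_ifs <;> first | ring1 | (exfalso; omega)
  · have hij : i = j := Fin.ext heq
    subst hij
    rw [show Mmat n i i = if i.val = 0 ∨ i.val = n then 1/5 else 2/7 from by
      simp [Mmat]]
    by_cases hi0 : i.val = 0
    · rw [if_pos (Or.inl hi0)]
      have h0n : (0:ℕ) < n := by omega
      rw [Finset.sum_eq_single_of_mem (⟨0, h0n⟩ : Fin n) (Finset.mem_univ _) ?side0]
      case side0 =>
        intro b _ hb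
        have hb' : ¬ (b.val = 0) := fun e => hb (Fin.ext e)
        simp only [Amat, of_apply]
        split_ifs <;> first | ring1 | (exfalso; omega)
      have h1 : Amat n (⟨0, h0n⟩ : Fin n) i = dv n 0 := by
        show (if i.val = 0 then dv n 0 else
          if i.val = 0 + 1 then -(dv n (0+1)) else 0) = dv n 0
        rw [if_pos hi0]
      rw [h1, dv_five (Or.inl rfl)]
      exact dv55
    · by_cases hin : i.val = n
      · rw [if_pos (Or.inr hin)]
        have hn1 : n - 1 < n := by omega
        rw [Finset.sum_eq_single_of_mem (⟨n-1, hn1⟩ : Fin n) (Finset.mem_univ _) ?side1]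
        case side1 =>
          intro b _ hb
          have hb' : ¬ (b.val = n - 1) := fun e => hb (Fin.ext e)
          have := b.isLt
          simp only [Amat, of_apply]
          split_ifs <;> first | ring1 | (exfalso; omega)
        have h1 : Amat n (⟨n-1, hn1⟩ : Fin n) i = -(dv n n) := by
          show (if i.val = n-1 then dv n (n-1) else
            if i.val = (n-1) + 1 then -(dv n ((n-1)+1)) else 0) = -(dv n n)
          rw [if_neg (by omega), if_pos (by omega), show n - 1 + 1 = n from by omega]
        rw [h1, dv_five (Or.inr rfl), neg_mul_neg]
        exact dv55
      · rw [if_neg (by omega)]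
        have hav : i.val < n := by have := i.isLt; omega
        have hbv : i.val - 1 < n := by omega
        have hne : (⟨i.val, hav⟩ : Fin n) ∈ Finset.univ.erase (⟨i.val - 1, hbv⟩ : Fin n) := by
          refine Finset.mem_erase.mpr ⟨?_, Finset.mem_univ _⟩
          intro e
          have : i.val = i.val - 1 := congrArg Fin.val e
          omega
        rw [← Finset.add_sum_erase _ _ (Finset.mem_univ (⟨i.val - 1, hbv⟩ : Fin n))]
        rw [Finset.sum_eq_single_of_mem (⟨i.val, hav⟩ : Fin n) hne ?side2]
        case side2 =>
          intro b hbmem hb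
          have hb1 : ¬ (b.val = i.val) := fun e => hb (Fin.ext e)
          have hb2 : ¬ (b.val = i.val - 1) :=
            fun e => (Finset.mem_erase.mp hbmem).1 (Fin.ext e)
          simp only [Amat, of_apply]
          split_ifs <;> first | ring1 | (exfalso; omega)
        have h1 : Amat n (⟨i.val - 1, hbv⟩ : Fin n) i = -(dv n i.val) := by
          show (if i.val = i.val - 1 then dv n (i.val-1) else
            if i.val = (i.val-1) + 1 then -(dv n ((i.val-1)+1)) else 0) = -(dv n i.val)
          rw [if_neg (by omega), if_pos (by omega), show i.val - 1 + 1 = i.val from by omega]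
        have h2 : Amat n (⟨i.val, hav⟩ : Fin n) i = dv n i.val := by
          show (if i.val = i.val then dv n i.val else
            if i.val = i.val + 1 then -(dv n (i.val+1)) else 0) = dv n i.val
          rw [if_pos rfl]
        rw [h1, h2, dv_seven (by omega), neg_mul_neg, dv77]
        norm_num
  · have h' : ∑ k : Fin n, Amat n k i * Amat n k j = ∑ k : Fin n, Amat n k j * Amat n k i :=
      Finset.sum_congr rfl fun k _ => mul_comm _ _
    rw [h', Mmat_symm]
    by_cases hadj : j.val + 1 = i.val
    · exact AtA_offdiag n hn j i hadj
    · have hij : ¬ (j = i) := fun e => by rw [e] at hgt; omega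
      rw [Finset.sum_eq_zero, Mmat, of_apply, if_neg hij, if_neg (by omega)]
      intro b _
      simp only [Amat, of_apply]
      split_ifs <;> first | ring1 | (exfalso; omega)

lemma eigen_nonneg (n : ℕ) (hn : 2 ≤ n) (x : ℝ)
    (hx : Polynomial.eval x (Mmat n).charpoly = 0) : 0 ≤ x := by
  have hdet : (x • (1 : Matrix (Fin (n+1)) (Fin (n+1)) ℝ) - Mmat n).det = 0 := by
    have h2 : (Polynomial.evalRingHom x).mapMatrix (Matrix.charmatrix (Mmat n))
        = x • (1 : Matrix (Fin (n+1)) (Fin (n+1)) ℝ) - Mmat n := by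
      ext i j
      by_cases h : i = j
      · subst h
        simp [Matrix.charmatrix_apply_eq, Matrix.one_apply_eq]
      · simp [Matrix.charmatrix_apply_ne _ _ _ h, Matrix.one_apply_ne h]
    rw [← h2, ← RingHom.map_det]
    exact hx
  obtain ⟨v, hv0, hv⟩ := Matrix.exists_mulVec_eq_zero_iff.mpr hdet
  have hMv : (Mmat n) *ᵥ v = x • v := by
    rw [Matrix.sub_mulVec, Matrix.smul_mulVec, Matrix.one_mulVec] at hv
    exact (sub_eq_zero.mp hv).symm
  have hq : x * (v ⬝ᵥ v) = (Amat n *ᵥ v) ⬝ᵥ (Amat n *ᵥ v) := by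
    have h1 : v ⬝ᵥ ((Mmat n) *ᵥ v) = x * (v ⬝ᵥ v) := by
      rw [hMv, dotProduct_smul, smul_eq_mul]
    rw [← h1, ← AtA n hn, ← Matrix.mulVec_mulVec, Matrix.dotProduct_mulVec,
      Matrix.vecMul_transpose]
  have hvv : 0 < v ⬝ᵥ v := by
    rcases (Finset.sum_nonneg fun i _ => mul_self_nonneg (v i)).lt_or_eq with h | h
    · exact h
    · exact absurd (dotProduct_self_eq_zero.mp h.symm) hv0
  have hww : 0 ≤ (Amat n *ᵥ v) ⬝ᵥ (Amat n *ᵥ v) :=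
    Finset.sum_nonneg fun i _ => mul_self_nonneg _
  nlinarith [hq, hvv, hww]

/-- Let `0 = α_1 ≤ α_2 ≤ … ≤ α_{n+1}` be the eigenvalues (with multiplicity) of `M`.
Then `∏_{i=2}^{n+1} α_i = (7n+3)/25 · (1/7)^{n−1}`. -/
theorem prod_nonzero_eigenvalues_Mmat (n : ℕ) (hn : 2 ≤ n)
    (α : Fin (n+1) → ℝ) (hmono : Monotone α)
    (hchar : (Mmat n).charpoly = ∏ i, (X - C (α i))) :
    (∏ i ∈ Finset.univ.filter (fun i : Fin (n+1) => i.val ≠ 0), α i)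
      = (7 * (n : ℝ) + 3) / 25 * (1/7)^(n-1) := by
  have hnonneg : ∀ i, 0 ≤ α i := fun i =>
    eigen_nonneg n hn (α i) (by
      rw [hchar, eval_prod]
      exact Finset.prod_eq_zero (Finset.mem_univ i) (by simp))
  have h0eval : Polynomial.eval 0 (Mmat n).charpoly = 0 := by
    rw [← coeff_zero_eq_eval_zero, charpoly_coeff_zero n hn]
  rw [hchar, eval_prod] at h0eval
  obtain ⟨j, -, hj⟩ := Finset.prod_eq_zero_iff.mp h0eval
  have hj' : α j = 0 := by
    simpa [sub_eq_zero, eq_comm] using hj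
  have hα0 : α 0 = 0 :=
    le_antisymm (hj' ▸ hmono (Fin.zero_le j)) (hnonneg 0)
  set E := Finset.univ.erase (0 : Fin (n+1)) with hE
  have hfact : (Mmat n).charpoly = X * ∏ i ∈ E, (X - C (α i)) := by
    rw [hchar, ← Finset.mul_prod_erase Finset.univ _ (Finset.mem_univ (0 : Fin (n+1))), hα0]
    simp [hE]
  have hq : (∏ i ∈ E, (X - C (α i))).coeff 0 = (Mmat n).charpoly.coeff 1 := by
    rw [hfact]
    exact (coeff_X_mul _ 0).symm
  have hcard : E.card = n := by
    rw [hE, Finset.card_erase_of_mem (Finset.mem_univ _), Finset.card_univ, Fintype.card_fin]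
    omega
  have hq2 : (∏ i ∈ E, (X - C (α i))).coeff 0 = (-1:ℝ)^n * ∏ i ∈ E, α i := by
    rw [coeff_zero_eq_eval_zero, eval_prod]
    calc (∏ i ∈ E, eval 0 (X - C (α i))) = ∏ i ∈ E, (-1) * α i :=
          Finset.prod_congr rfl fun i _ => by simp
      _ = (-1:ℝ)^E.card * ∏ i ∈ E, α i := by
          rw [Finset.prod_mul_distrib, Finset.prod_const]
      _ = (-1:ℝ)^n * ∏ i ∈ E, α i := by rw [hcard]
  have hfe : Finset.univ.filter (fun i : Fin (n+1) => i.val ≠ 0) = E := by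
    ext i
    rw [hE, Finset.mem_filter, Finset.mem_erase]
    exact ⟨fun h => ⟨fun e => h.2 (by rw [e, Fin.val_zero]), Finset.mem_univ _⟩,
      fun h => ⟨Finset.mem_univ _, fun e => h.1 (Fin.ext (by rw [e, Fin.val_zero]))⟩⟩
  rw [hfe]
  have hmain : (-1:ℝ)^n * ∏ i ∈ E, α i
      = (-1:ℝ)^n * ((7*(n:ℝ)+3)/25 * (1/7)^(n-1)) := by
    rw [← hq2, hq, charpoly_coeff_one n hn]
  exact mul_left_cancel₀ (pow_ne_zero n (by norm_num : (-1:ℝ) ≠ 0)) hmain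
end
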